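/- In the Chinese restaurant process with parameter θ > 0, the number X_n of occupied tables after n customers satisfies P(X_n = ℓ) = S1(n,ℓ) · θ^ℓ / (θ(θ+1)···(θ+n-1)) for 1 ≤ ℓ ≤ n, where S1(n,ℓ) is the unsigned Stirling number of the first kind. -/

import Mathlib

open Finset

/-- Unsigned Stirling numbers of the first kind. -/
def S1 : ℕ → ℕ → ℕ
  | 0, 0 => 1
  | 0, _ + 1 => 0
  | _ + 1, 0 => 0
  | n + 1, k + 1 => S1 n k + n * S1 n (k + 1)

lemma stirling_sum (n ℓ : ℕ) :
    ∑ A ∈ (Finset.range n).powersetCard ℓ, ∏ i ∈ Finset.range n \ A, (i : ℝ)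
      = S1 n ℓ := by
  induction n generalizing ℓ with
  | zero =>
    cases ℓ with
    | zero => simp [S1]
    | succ k => simp [S1, Finset.powersetCard_eq_empty]
  | succ n ih =>
    cases ℓ with
    | zero =>
      simp only [Finset.powersetCard_zero, Finset.sum_singleton, Finset.sdiff_empty]
      rw [Finset.prod_eq_zero (Finset.mem_range.2 (Nat.succ_pos n)) (by norm_num)]
      simp [S1]
    | succ k =>
      have hn : n ∉ Finset.range n := by simp
      rw [Finset.range_add_one, Finset.powersetCard_succ_insert hn]
      rw [Finset.sum_union (by
        rw [Finset.disjoint_left]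
        intro A hA hA'
        obtain ⟨B, hB, rfl⟩ := Finset.mem_image.1 hA'
        exact hn ((Finset.mem_powersetCard.1 hA).1 (Finset.mem_insert_self n B)))]
      rw [Finset.sum_image (fun B hB B' hB' h => by
        have hB1 : n ∉ B := fun h' => hn ((Finset.mem_powersetCard.1 hB).1 h')
        have hB2 : n ∉ B' := fun h' => hn ((Finset.mem_powersetCard.1 hB').1 h')
        have := congrArg (fun s => Finset.erase s n) h
        simpa [Finset.erase_insert hB1, Finset.erase_insert hB2] using this)]
      have e1 : ∀ A ∈ (Finset.range n).powersetCard (k+1),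
          ∏ i ∈ insert n (Finset.range n) \ A, (i : ℝ)
            = n * ∏ i ∈ Finset.range n \ A, (i : ℝ) := by
        intro A hA
        have hnA : n ∉ A := fun h' => hn ((Finset.mem_powersetCard.1 hA).1 h')
        rw [Finset.insert_sdiff_of_notMem _ hnA,
          Finset.prod_insert (fun h' => hn (Finset.mem_sdiff.1 h').1)]
      have e2 : ∀ B ∈ (Finset.range n).powersetCard k,
          ∏ i ∈ insert n (Finset.range n) \ insert n B, (i : ℝ)
            = ∏ i ∈ Finset.range n \ B, (i : ℝ) := by
        intro B hB
        congr 1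
        ext i
        simp only [Finset.mem_sdiff, Finset.mem_insert, Finset.mem_range]
        have : i < n → i ≠ n := by omega
        tauto
      rw [Finset.sum_congr rfl e1, Finset.sum_congr rfl e2, ← Finset.mul_sum,
        ih (k+1), ih k]
      show _ = ((S1 n k + n * S1 n (k+1) : ℕ) : ℝ)
      push_cast
      ring

/-- In the Chinese restaurant process with parameter `θ > 0`, the number of occupied
tables after `n` customers is `X_n = Y₁ + ⋯ + Y_n` with independent Bernoulli `Y_i`,
`P(Y_i = 1) = θ/(i-1+θ)`.  Then `P(X_n = ℓ) = S1(n,ℓ) θ^ℓ / θ^{↑n}`.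
(The probability `P(X_n = ℓ)` is written as the sum over the possible sets of success
times of the product of the corresponding probabilities.) -/
theorem chinese_restaurant_distribution (θ : ℝ) (hθ : 0 < θ) (n ℓ : ℕ)
    (hℓ : 1 ≤ ℓ) (hℓn : ℓ ≤ n) :
    ∑ A ∈ (Finset.range n).powersetCard ℓ,
        (∏ i ∈ A, θ / (i + θ)) * ∏ i ∈ (Finset.range n) \ A, (1 - θ / (i + θ))
      = (S1 n ℓ : ℝ) * θ ^ ℓ / ∏ i ∈ Finset.range n, (θ + i) := by
  have hpos : ∀ i : ℕ, (0:ℝ) < i + θ := fun i => by positivity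
  have key : ∀ A ∈ (Finset.range n).powersetCard ℓ,
      (∏ i ∈ A, θ / (i + θ)) * ∏ i ∈ (Finset.range n) \ A, (1 - θ / (i + θ))
        = θ ^ ℓ * (∏ i ∈ Finset.range n \ A, (i:ℝ)) / ∏ i ∈ Finset.range n, (θ + i) := by
    intro A hA
    obtain ⟨hAs, hAc⟩ := Finset.mem_powersetCard.1 hA
    have h1 : ∀ i ∈ Finset.range n \ A, (1 - θ / (↑i + θ)) = (i:ℝ) / (↑i + θ) := by
      intro i _
      field_simp
      ring
    rw [Finset.prod_congr rfl h1, Finset.prod_div_distrib, Finset.prod_div_distrib,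
      Finset.prod_const, hAc]
    rw [div_mul_div_comm]
    congr 1
    rw [mul_comm, Finset.prod_sdiff hAs]
    exact Finset.prod_congr rfl (fun i _ => by ring)
  rw [Finset.sum_congr rfl key, ← Finset.sum_div, ← Finset.mul_sum, stirling_sum,
    mul_comm]
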